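/- In a dagger category, if g : B ⟶ A is a Moore-Penrose inverse of f : A ⟶ B, then g is a †-Drazin inverse of f for which axiom [D†.1] holds with k = 1 (so g is the †-group inverse of f), and moreover f is a †-Drazin inverse of g. -/
import Mathlib


open CategoryTheory

universe v u

/-- A dagger on a category: an identity-on-objects contravariant involution. -/
structure Dagger (C : Type u) [Category.{v} C] where
  dag : ∀ {X Y : C}, (X ⟶ Y) → (Y ⟶ X)
  dag_id : ∀ X : C, dag (𝟙 X) = 𝟙 X
  dag_comp : ∀ {X Y Z : C} (f : X ⟶ Y) (g : Y ⟶ Z), dag (f ≫ g) = dag g ≫ dag f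
  dag_dag : ∀ {X Y : C} (f : X ⟶ Y), dag (dag f) = f

/-- Iterated composition power of an endomorphism, with `cpow x 0 = 𝟙 A`. -/
def cpow {C : Type u} [Category.{v} C] {A : C} (x : A ⟶ A) : ℕ → (A ⟶ A)
  | 0 => 𝟙 A
  | n + 1 => cpow x n ≫ x

/-- `p` is a †-Drazin inverse of `f`. -/
def IsDagDrazinInv {C : Type u} [Category.{v} C] (D : Dagger C)
    {A B : C} (f : A ⟶ B) (p : B ⟶ A) : Prop :=
  (∃ k : ℕ, cpow (f ≫ D.dag f) k ≫ f ≫ p = cpow (f ≫ D.dag f) k ∧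
    p ≫ f ≫ cpow (D.dag f ≫ f) k = cpow (D.dag f ≫ f) k) ∧
  p ≫ f ≫ p = p ∧
  D.dag (f ≫ p) = f ≫ p ∧
  D.dag (p ≫ f) = p ≫ f

/-- `p` is a Moore-Penrose inverse of `f`. -/
def IsMPInv {C : Type u} [Category.{v} C] (D : Dagger C)
    {A B : C} (f : A ⟶ B) (p : B ⟶ A) : Prop :=
  f ≫ p ≫ f = f ∧
  p ≫ f ≫ p = p ∧
  D.dag (f ≫ p) = f ≫ p ∧
  D.dag (p ≫ f) = p ≫ f

lemma mp_aux {C : Type u} [Category.{v} C] (D : Dagger C)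
    {A B : C} (f : A ⟶ B) (g : B ⟶ A) (h : IsMPInv D f g) :
    IsDagDrazinInv D f g ∧
    (f ≫ D.dag f) ≫ f ≫ g = f ≫ D.dag f ∧
    g ≫ f ≫ (D.dag f ≫ f) = D.dag f ≫ f := by
  obtain ⟨h1, h2, h3, h4⟩ := h
  have k1 : D.dag f ≫ f ≫ g = D.dag f := by
    conv_rhs => rw [← h1, ← Category.assoc, D.dag_comp, h3]
  have k2 : g ≫ f ≫ D.dag f = D.dag f := by
    conv_rhs => rw [← h1, D.dag_comp, h4]
    rw [Category.assoc]
  have e1 : (f ≫ D.dag f) ≫ f ≫ g = f ≫ D.dag f := by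
    rw [Category.assoc, k1]
  have e2 : g ≫ f ≫ (D.dag f ≫ f) = D.dag f ≫ f := by
    rw [← Category.assoc, ← Category.assoc, Category.assoc g f (D.dag f), k2]
  refine ⟨⟨⟨1, ?_, ?_⟩, h2, h3, h4⟩, e1, e2⟩
  · simpa [cpow] using e1
  · simpa [cpow] using e2

/-- A Moore-Penrose inverse of `f` is the †-Drazin inverse of `f` with [D†.1] holding at
`k = 1` (i.e. the †-group inverse), and `f` is in turn the †-Drazin inverse of it. -/
theorem mpInv_dagDrazinInv {C : Type u} [Category.{v} C] (D : Dagger C)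
    {A B : C} (f : A ⟶ B) (g : B ⟶ A) (h : IsMPInv D f g) :
    IsDagDrazinInv D f g ∧
    (f ≫ D.dag f) ≫ f ≫ g = f ≫ D.dag f ∧
    g ≫ f ≫ (D.dag f ≫ f) = D.dag f ≫ f ∧
    IsDagDrazinInv D g f := by
  obtain ⟨d1, e1, e2⟩ := mp_aux D f g h
  obtain ⟨h1, h2, h3, h4⟩ := h
  have h' : IsMPInv D g f := ⟨h2, h1, h4, h3⟩
  exact ⟨d1, e1, e2, (mp_aux D g f h').1⟩
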